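/- Let W be a matrix weight on I₀ and let (Ã_J)_{J∈𝒟} be positive semidefinite symmetric d×d matrices satisfying (1/|I|) Σ_{J∈𝒟(I)} Ã_J ≤ ⟨W⟩_I (as quadratic forms) for every I ∈ 𝒟. Fix n ≥ 0 and s ≥ 0, set W_n = Σ_{I∈𝒟^n} ⟨W⟩_I 1_I and W_{n,s} = W_n + s Σ_{I∈𝒟₊^{≤n}} |S_I|^{-1} 1_{S_I} Ã_I, where S_I is the leftmost dyadic interval of length 2^{-n-1} contained in I. Then for every I ∈ 𝒟₊^{≤n}: ⟨W_{n,s}⟩_I = ⟨W⟩_I + (s/|I|) Σ_{J∈𝒟₊^{≤n}, J⊆I} Ã_J ≤ (1+s) ⟨W⟩_I as quadratic forms. -/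

import Mathlib

open MeasureTheory Set
open scoped ENNReal Matrix Pointwise Classical

noncomputable section

/-- The unit interval `I₀ = [0,1)`. -/
def I0 : Set ℝ := Set.Ico (0 : ℝ) 1

/-- The dyadic interval `[k/2^n, (k+1)/2^n)`. -/
def dyad (n k : ℕ) : Set ℝ := Set.Ico ((k : ℝ) / 2 ^ n) (((k : ℝ) + 1) / 2 ^ n)

/-- Real `d × d` matrices. -/
abbrev Mat (d : ℕ) := Matrix (Fin d) (Fin d) ℝ

/-- The Euclidean norm `|v|_{ℝ^d}`. -/
def enorm2 {d : ℕ} (v : Fin d → ℝ) : ℝ := Real.sqrt (∑ i, v i ^ 2)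

/-- The Euclidean inner product `⟨v, w⟩_{ℝ^d}`. -/
def dotp {d : ℕ} (v w : Fin d → ℝ) : ℝ := ∑ i, v i * w i

open scoped Classical in
/-- The positive semidefinite square root of a positive semidefinite matrix
(junk value `0` if the matrix is not positive semidefinite). -/
def matSqrt {d : ℕ} (A : Mat d) : Mat d := if h : A.PosSemidef then
    h.1.eigenvectorUnitary.1 * Matrix.diagonal (Real.sqrt ∘ h.1.eigenvalues) *
      (star h.1.eigenvectorUnitary : Mat d) else 0

/-- Order in the sense of quadratic forms: `A ⩽ B` iff `B - A` is positive semidefinite. -/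
def matLE {d : ℕ} (A B : Mat d) : Prop := (B - A).PosSemidef

/-- The average `⟨g⟩_I = |I|⁻¹ ∫_I g` of a (scalar- or vector-valued) function. -/
def avgOn {E : Type*} [NormedAddCommGroup E] [NormedSpace ℝ E] (I : Set ℝ) (g : ℝ → E) : E :=
  (volume I).toReal⁻¹ • ∫ x in I, g x

/-- The entrywise average `⟨W⟩_I` of a matrix-valued function. -/
def avgMat {d : ℕ} (I : Set ℝ) (W : ℝ → Mat d) : Mat d :=
  Matrix.of fun i j => avgOn I fun x => W x i j

/-- A matrix weight on `I₀`: an integrable function with symmetric values,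
positive definite a.e. on `I₀`. -/
structure IsMatrixWeight (d : ℕ) (W : ℝ → Mat d) : Prop where
  intOn : ∀ i j, IntegrableOn (fun x => W x i j) I0
  symm : ∀ x, (W x).IsSymm
  posdef : ∀ᵐ x ∂(volume.restrict I0), (W x).PosDef

/-- Membership in `L²_W(ℝ^d)`. -/
def MemL2W {d : ℕ} (W : ℝ → Mat d) (f : ℝ → Fin d → ℝ) : Prop :=
  Measurable f ∧ IntegrableOn (fun x => dotp (W x *ᵥ f x) (f x)) I0

/-- The squared norm `‖f‖²_{L²_W} = ∫_{I₀} ⟨W(x) f(x), f(x)⟩ dx`. -/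
def l2normSq {d : ℕ} (W : ℝ → Mat d) (f : ℝ → Fin d → ℝ) : ℝ :=
  ∫ x in I0, dotp (W x *ᵥ f x) (f x)

/-- The average `⟨φ W f⟩_I = |I|⁻¹ ∫_I φ(y) W(y) f(y) dy`. -/
def avgPhiWf {d : ℕ} (I : Set ℝ) (φ : ℝ → ℝ) (W : ℝ → Mat d) (f : ℝ → Fin d → ℝ) :
    Fin d → ℝ :=
  avgOn I fun y => φ y • (W y *ᵥ f y)

/-- Admissible functions `φ : I → [-1,1]`, measurable. -/
def Adm (I : Set ℝ) (φ : ℝ → ℝ) : Prop :=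
  Measurable φ ∧ ∀ y ∈ I, φ y ∈ Set.Icc (-1 : ℝ) 1

/-- The martingale weight at time `n`: `W_n = Σ_{I∈𝒟^n} ⟨W⟩_I 1_I`. -/
def Wmart {d : ℕ} (W : ℝ → Mat d) (n : ℕ) (x : ℝ) : Mat d :=
  ∑ k ∈ Finset.range (2 ^ n), if x ∈ dyad n k then avgMat (dyad n k) W else 0

/-- The index set of `𝒟₊^{≤n}`: pairs `(m,k)` with `1 ≤ m ≤ n`, `k < 2^m`, `k` odd,
corresponding to the dyadic intervals in `𝒟₊` of length at least `2^{-n}`. -/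
def DplusLe (n : ℕ) : Finset (ℕ × ℕ) :=
  (Finset.Icc 1 n ×ˢ Finset.range (2 ^ n)).filter fun p => p.2 < 2 ^ p.1 ∧ p.2 % 2 = 1

/-- For `I = dyad m k`, the leftmost dyadic interval of length `2^{-(n+1)}`
contained in `I`: `S_I = dyad (n+1) (k·2^{n+1-m})`. -/
def SIdx (n : ℕ) (p : ℕ × ℕ) : Set ℝ := dyad (n + 1) (p.2 * 2 ^ (n + 1 - p.1))

/-- The perturbed weight `W_{n,s} = W_n + s Σ_{I∈𝒟₊^{≤n}} |S_I|⁻¹ 1_{S_I} Ã_I`. -/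
def Wns {d : ℕ} (W : ℝ → Mat d) (Atil : ℕ × ℕ → Mat d) (n : ℕ) (s : ℝ) (x : ℝ) : Mat d :=
  Wmart W n x +
    s • ∑ p ∈ DplusLe n,
      if x ∈ SIdx n p then ((volume (SIdx n p)).toReal)⁻¹ • Atil p else 0

section Helpers

variable {d : ℕ}

lemma two_pow_pos' (n : ℕ) : (0:ℝ) < 2 ^ n := by positivity

lemma measurableSet_dyad (n k : ℕ) : MeasurableSet (dyad n k) := measurableSet_Ico

lemma volume_dyad (n k : ℕ) : volume (dyad n k) = ENNReal.ofReal ((2 ^ n : ℝ)⁻¹) := by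
  rw [dyad, Real.volume_Ico]
  congr 1
  field_simp
  ring

lemma volume_dyad_toReal (n k : ℕ) : (volume (dyad n k)).toReal = (2 ^ n : ℝ)⁻¹ := by
  rw [volume_dyad, ENNReal.toReal_ofReal (by positivity)]

lemma volume_dyad_lt_top (n k : ℕ) : volume (dyad n k) < ⊤ := by
  rw [volume_dyad]; exact ENNReal.ofReal_lt_top

lemma mem_dyad_iff {x : ℝ} {n k : ℕ} :
    x ∈ dyad n k ↔ (k : ℝ) ≤ x * 2 ^ n ∧ x * 2 ^ n < (k : ℝ) + 1 := by
  rw [dyad, Set.mem_Ico, div_le_iff₀ (two_pow_pos' n), lt_div_iff₀ (two_pow_pos' n)]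

lemma dyad_disjoint {n k k' : ℕ} (h : k ≠ k') : Disjoint (dyad n k) (dyad n k') := by
  rw [Set.disjoint_left]
  intro x hx hx'
  rw [mem_dyad_iff] at hx hx'
  have : k = k' := by
    have h1 : (k : ℝ) < (k' : ℝ) + 1 := lt_of_le_of_lt hx.1 hx'.2
    have h2 : (k' : ℝ) < (k : ℝ) + 1 := lt_of_le_of_lt hx'.1 hx.2
    have h1' : k < k' + 1 := by exact_mod_cast h1
    have h2' : k' < k + 1 := by exact_mod_cast h2
    omega
  exact h this

lemma dyad_subset_I0 {n k : ℕ} (h : k < 2 ^ n) : dyad n k ⊆ I0 := by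
  intro x hx
  rw [dyad, Set.mem_Ico] at hx
  constructor
  · have : (0:ℝ) ≤ (k : ℝ) / 2 ^ n := by positivity
    linarith [hx.1]
  · have hk1 : (k : ℝ) + 1 ≤ 2 ^ n := by exact_mod_cast Nat.succ_le_of_lt h
    have : ((k : ℝ) + 1) / 2 ^ n ≤ 1 := by
      rw [div_le_one (two_pow_pos' n)]; exact hk1
    linarith [hx.2]

lemma exists_dyad_mem {x : ℝ} (hx : x ∈ I0) (n : ℕ) :
    ∃ j < 2 ^ n, x ∈ dyad n j := by
  obtain ⟨hx0, hx1⟩ := hx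
  refine ⟨⌊x * 2 ^ n⌋₊, ?_, ?_⟩
  · rw [Nat.floor_lt (by positivity)]
    calc x * 2 ^ n < 1 * 2 ^ n := by nlinarith [two_pow_pos' n]
    _ = ((2:ℝ) ^ n) := by ring
    _ = ((2 ^ n : ℕ) : ℝ) := by push_cast; ring
  · rw [mem_dyad_iff]
    exact ⟨Nat.floor_le (by positivity), Nat.lt_floor_add_one _⟩

lemma dyad_subset_iff {m m' k k' : ℕ} (h : m ≤ m') :
    dyad m' k' ⊆ dyad m k ↔ k * 2 ^ (m' - m) ≤ k' ∧ k' + 1 ≤ (k + 1) * 2 ^ (m' - m) := by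
  have hpow : (2:ℝ) ^ m' = 2 ^ (m' - m) * 2 ^ m := by
    rw [← pow_add]; congr 1; omega
  rw [dyad, dyad, Set.Ico_subset_Ico_iff (by have := two_pow_pos' m'; apply div_lt_div_of_pos_right (by linarith) this)]
  constructor
  · rintro ⟨h1, h2⟩
    constructor
    · rw [div_le_div_iff₀ (two_pow_pos' m) (two_pow_pos' m')] at h1
      rw [hpow] at h1
      have : (↑(k * 2 ^ (m' - m)) : ℝ) ≤ k' := by push_cast; nlinarith [two_pow_pos' m]
      exact_mod_cast this
    · rw [div_le_div_iff₀ (two_pow_pos' m') (two_pow_pos' m)] at h2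
      rw [hpow] at h2
      have : ((k' + 1 : ℕ) : ℝ) ≤ ((k + 1) * 2 ^ (m' - m) : ℕ) := by
        push_cast; nlinarith [two_pow_pos' m]
      exact_mod_cast this
  · rintro ⟨h1, h2⟩
    have h1' : ((k * 2 ^ (m' - m) : ℕ) : ℝ) ≤ k' := by exact_mod_cast h1
    have h2' : ((k' + 1 : ℕ) : ℝ) ≤ ((k + 1) * 2 ^ (m' - m) : ℕ) := by exact_mod_cast h2
    push_cast at h1' h2'
    constructor
    · rw [div_le_div_iff₀ (two_pow_pos' m) (two_pow_pos' m'), hpow]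
      nlinarith [two_pow_pos' m]
    · rw [div_le_div_iff₀ (two_pow_pos' m') (two_pow_pos' m), hpow]
      nlinarith [two_pow_pos' m]

end Helpers

lemma dyad_subset_or_disjoint {m m' k k' : ℕ} (h : m ≤ m') :
    dyad m' k' ⊆ dyad m k ∨ Disjoint (dyad m' k') (dyad m k) := by
  by_cases hs : dyad m' k' ⊆ dyad m k
  · exact Or.inl hs
  right
  rw [dyad_subset_iff h] at hs
  push_neg at hs
  rw [Set.disjoint_left]
  intro x hx hx'
  rw [mem_dyad_iff] at hx hx'
  have hpow : (2:ℝ) ^ m' = 2 ^ (m' - m) * 2 ^ m := by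
    rw [← pow_add]; congr 1; omega
  have hxm : (k:ℝ) * 2 ^ (m' - m) ≤ x * 2 ^ m' ∧ x * 2 ^ m' < ((k:ℝ)+1) * 2 ^ (m'-m) := by
    constructor
    · calc (k:ℝ) * 2 ^ (m'-m) ≤ (x * 2 ^ m) * 2 ^ (m'-m) := by
            have := hx'.1; nlinarith [two_pow_pos' (m'-m)]
        _ = x * 2 ^ m' := by rw [hpow]; ring
    · calc x * 2 ^ m' = (x * 2 ^ m) * 2 ^ (m'-m) := by rw [hpow]; ring
        _ < ((k:ℝ)+1) * 2 ^ (m'-m) := by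
            have := hx'.2; nlinarith [two_pow_pos' (m'-m)]
  by_cases h1 : k * 2 ^ (m' - m) ≤ k'
  · have h2 := hs h1
    have h2' : ((k:ℝ)+1) * 2 ^ (m'-m) ≤ (k':ℝ) := by
      have : ((k+1) * 2 ^ (m'-m) : ℕ) ≤ (k' : ℕ) := by omega
      have := (Nat.cast_le (α := ℝ)).mpr this
      push_cast at this; linarith
    have := hx.1
    linarith [hxm.2]
  · push_neg at h1
    have h1' : (k':ℝ) + 1 ≤ (k:ℝ) * 2 ^ (m'-m) := by
      have : (k' + 1 : ℕ) ≤ k * 2 ^ (m'-m) := by omega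
      have := (Nat.cast_le (α := ℝ)).mpr this
      push_cast at this; linarith
    have := hx.2
    linarith [hxm.1]

lemma dyad_nonempty (n k : ℕ) : (dyad n k).Nonempty := by
  refine ⟨(k:ℝ)/2^n, ?_⟩
  rw [dyad, Set.mem_Ico]
  refine ⟨le_refl _, ?_⟩
  have := two_pow_pos' n
  apply div_lt_div_of_pos_right (by linarith) this

lemma SIdx_subset_dyad {n : ℕ} {p : ℕ × ℕ} (hp : p.1 ≤ n) :
    SIdx n p ⊆ dyad p.1 p.2 := by
  rw [SIdx, dyad_subset_iff (by omega : p.1 ≤ n + 1)]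
  constructor
  · exact le_refl _
  · have h1 : 1 ≤ 2 ^ (n + 1 - p.1) := Nat.one_le_two_pow
    nlinarith

lemma SIdx_subset_iff {n m k : ℕ} {p : ℕ × ℕ} (hp1 : 1 ≤ p.1) (hpn : p.1 ≤ n)
    (hp2 : p.2 < 2 ^ p.1) (hmn : m ≤ n) (hodd : k % 2 = 1) :
    SIdx n p ⊆ dyad m k ↔ dyad p.1 p.2 ⊆ dyad m k := by
  constructor
  · intro hS
    rw [SIdx, dyad_subset_iff (by omega : m ≤ n + 1)] at hS
    obtain ⟨hS1, hS2⟩ := hS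
    by_cases hma : m ≤ p.1
    · rw [dyad_subset_iff hma]
      have hsplit : 2 ^ (n + 1 - m) = 2 ^ (p.1 - m) * 2 ^ (n + 1 - p.1) := by
        rw [← pow_add]; congr 1; omega
      have hEpos : 0 < 2 ^ (n + 1 - p.1) := pow_pos (by omega) _
      constructor
      · have : k * 2 ^ (p.1 - m) * 2 ^ (n + 1 - p.1) ≤ p.2 * 2 ^ (n + 1 - p.1) := by
          calc k * 2 ^ (p.1 - m) * 2 ^ (n + 1 - p.1) = k * 2 ^ (n + 1 - m) := by
                rw [hsplit]; ring
            _ ≤ p.2 * 2 ^ (n + 1 - p.1) := hS1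
        exact Nat.le_of_mul_le_mul_right this hEpos
      · have : p.2 * 2 ^ (n+1-p.1) < (k+1) * 2 ^ (p.1-m) * 2 ^ (n+1-p.1) := by
          calc p.2 * 2 ^ (n+1-p.1) < p.2 * 2 ^ (n+1-p.1) + 1 := by omega
            _ ≤ (k+1) * 2 ^ (n+1-m) := hS2
            _ = (k+1) * 2 ^ (p.1-m) * 2 ^ (n+1-p.1) := by rw [hsplit]; ring
        have := Nat.lt_of_mul_lt_mul_right this
        omega
    · exfalso
      push_neg at hma
      -- dyad m k ⊆ dyad p.1 p.2, and k = p.2 * 2^(m - p.1), even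
      have hsub : dyad m k ⊆ dyad p.1 p.2 := by
        rcases dyad_subset_or_disjoint (le_of_lt hma) (m' := m) (k' := k) (k := p.2) with h | h
        · exact h
        · exfalso
          obtain ⟨x, hxS⟩ := dyad_nonempty (n+1) (p.2 * 2 ^ (n + 1 - p.1))
          have hx1 : x ∈ dyad m k := by
            have : SIdx n p ⊆ dyad m k := by
              rw [SIdx, dyad_subset_iff (by omega : m ≤ n + 1)]; exact ⟨hS1, hS2⟩
            exact this hxS
          have hx2 : x ∈ dyad p.1 p.2 := SIdx_subset_dyad hpn hxS
          exact Set.disjoint_left.mp h hx1 hx2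
      rw [dyad_subset_iff (le_of_lt hma)] at hsub
      have hk1 : p.2 * 2 ^ (m - p.1) ≤ k := hsub.1
      have hk2 : k ≤ p.2 * 2 ^ (m - p.1) := by
        have hsplit : 2 ^ (n + 1 - m) * 2 ^ (m - p.1) = 2 ^ (n + 1 - p.1) := by
          rw [← pow_add]; congr 1; omega
        have hEpos : 0 < 2 ^ (n + 1 - m) := pow_pos (by omega) _
        have : k * 2 ^ (n + 1 - m) ≤ p.2 * 2 ^ (m - p.1) * 2 ^ (n + 1 - m) := by
          calc k * 2 ^ (n + 1 - m) ≤ p.2 * 2 ^ (n + 1 - p.1) := hS1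
            _ = p.2 * 2 ^ (m - p.1) * 2 ^ (n + 1 - m) := by rw [← hsplit]; ring
        exact Nat.le_of_mul_le_mul_right this hEpos
      have hkeq : k = p.2 * 2 ^ (m - p.1) := le_antisymm hk2 hk1
      have : k % 2 = 0 := by
        rw [hkeq]
        have : m - p.1 = (m - p.1 - 1) + 1 := by omega
        rw [this, pow_succ, ← mul_assoc]
        exact Nat.mul_mod_left _ 2
      omega
  · intro hsub
    exact subset_trans (SIdx_subset_dyad hpn) hsub

lemma integrableOn_ite_const {c : ℝ} {S J : Set ℝ} (hS : MeasurableSet S)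
    (hJ : volume J < ⊤) : IntegrableOn (fun x => if x ∈ S then c else 0) J := by
  have : (fun x => if x ∈ S then c else 0) = S.indicator (fun _ => c) := by
    funext x; simp [Set.indicator_apply]
  rw [this]
  exact (integrableOn_const hJ.ne).indicator hS

lemma setIntegral_ite_const {c : ℝ} {S J : Set ℝ} (hS : MeasurableSet S) :
    ∫ x in J, (if x ∈ S then c else 0) = (volume (J ∩ S)).toReal * c := by
  have : (fun x => if x ∈ S then c else 0) = S.indicator (fun _ => c) := by
    funext x; simp [Set.indicator_apply]
  rw [this, setIntegral_indicator hS, setIntegral_const, smul_eq_mul]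
  rfl

example : True := trivial

variable {d : ℕ}

lemma intOn_dyad {W : ℝ → Mat d} (hW : IsMatrixWeight d W) {n k : ℕ} (hk : k < 2 ^ n)
    (i j : Fin d) : IntegrableOn (fun x => W x i j) (dyad n k) :=
  (hW.intOn i j).mono_set (dyad_subset_I0 hk)

lemma avgMat_mul_volume {W : ℝ → Mat d} {n k : ℕ} (i j : Fin d) :
    (volume (dyad n k)).toReal * avgMat (dyad n k) W i j = ∫ x in dyad n k, W x i j := by
  rw [avgMat, Matrix.of_apply, avgOn, smul_eq_mul, volume_dyad_toReal, ← mul_assoc,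
    mul_inv_cancel₀ (by positivity), one_mul]

/-- Entry formula for `Wmart`. -/
lemma Wmart_apply {W : ℝ → Mat d} {n : ℕ} {x : ℝ} (i j : Fin d) :
    Wmart W n x i j
      = ∑ l ∈ Finset.range (2 ^ n), (if x ∈ dyad n l then avgMat (dyad n l) W i j else 0) := by
  rw [Wmart, Matrix.sum_apply]
  refine Finset.sum_congr rfl fun l _ => ?_
  split <;> simp

lemma integrableOn_Wmart_entry {W : ℝ → Mat d} {n : ℕ} {J : Set ℝ} (hJ : volume J < ⊤)
    (i j : Fin d) : IntegrableOn (fun x => Wmart W n x i j) J := by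
  have : (fun x => Wmart W n x i j) = fun x =>
      ∑ l ∈ Finset.range (2 ^ n), (if x ∈ dyad n l then avgMat (dyad n l) W i j else 0) := by
    funext x; exact Wmart_apply i j
  rw [this]
  exact integrable_finset_sum _ fun l _ => integrableOn_ite_const (measurableSet_dyad n l) hJ

lemma integral_Wmart {W : ℝ → Mat d} (hW : IsMatrixWeight d W) {n m k : ℕ}
    (hmn : m ≤ n) (hk : k < 2 ^ m) (i j : Fin d) :
    ∫ x in dyad m k, Wmart W n x i j = ∫ x in dyad m k, W x i j := by
  have hint : ∀ l ∈ Finset.range (2 ^ n), IntegrableOn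
      (fun x => if x ∈ dyad n l then avgMat (dyad n l) W i j else 0) (dyad m k) :=
    fun l _ => integrableOn_ite_const (measurableSet_dyad n l) (volume_dyad_lt_top m k)
  calc ∫ x in dyad m k, Wmart W n x i j
      = ∫ x in dyad m k, ∑ l ∈ Finset.range (2 ^ n),
          (if x ∈ dyad n l then avgMat (dyad n l) W i j else 0) := by
        refine setIntegral_congr_fun (measurableSet_dyad m k) fun x _ => Wmart_apply i j
    _ = ∑ l ∈ Finset.range (2 ^ n), ∫ x in dyad m k,
          (if x ∈ dyad n l then avgMat (dyad n l) W i j else 0) :=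
        integral_finset_sum _ hint
    _ = ∑ l ∈ Finset.range (2 ^ n), (if dyad n l ⊆ dyad m k then ∫ x in dyad n l, W x i j else 0) := by
        refine Finset.sum_congr rfl fun l _ => ?_
        rw [setIntegral_ite_const (measurableSet_dyad n l)]
        rcases dyad_subset_or_disjoint (m := m) (m' := n) (k := k) (k' := l) hmn with hsub | hdis
        · rw [if_pos hsub, Set.inter_eq_self_of_subset_right hsub, ← avgMat_mul_volume]
        · rw [if_neg ?_, hdis.symm.inter_eq, measure_empty]
          · simp
          · intro hsub
            obtain ⟨x, hx⟩ := dyad_nonempty n l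
            exact Set.disjoint_left.mp hdis hx (hsub hx)
    _ = ∑ l ∈ (Finset.range (2 ^ n)).filter (fun l => dyad n l ⊆ dyad m k),
          ∫ x in dyad n l, W x i j := by rw [Finset.sum_filter]
    _ = ∫ x in (⋃ l ∈ (Finset.range (2 ^ n)).filter (fun l => dyad n l ⊆ dyad m k), dyad n l),
          W x i j := by
        refine (integral_biUnion_finset _ (fun l _ => measurableSet_dyad n l) ?_ ?_).symm
        · intro a _ b _ hab
          exact dyad_disjoint hab
        · intro l hl
          exact intOn_dyad hW (Finset.mem_range.mp (Finset.mem_filter.mp hl).1) i j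
    _ = ∫ x in dyad m k, W x i j := by
        have hset : (⋃ l ∈ (Finset.range (2 ^ n)).filter (fun l => dyad n l ⊆ dyad m k), dyad n l)
            = dyad m k := by
          apply Set.Subset.antisymm
          · intro x hx
            simp only [Set.mem_iUnion] at hx
            obtain ⟨l, hl, hxl⟩ := hx
            exact (Finset.mem_filter.mp hl).2 hxl
          · intro x hx
            obtain ⟨l, hl, hxl⟩ := exists_dyad_mem (dyad_subset_I0 hk hx) n
            have hsub : dyad n l ⊆ dyad m k := by
              rcases dyad_subset_or_disjoint (m := m) (m' := n) (k := k) (k' := l) hmn with h | h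
              · exact h
              · exact absurd hx (Set.disjoint_left.mp h hxl)
            exact Set.mem_iUnion₂.mpr ⟨l, Finset.mem_filter.mpr ⟨Finset.mem_range.mpr hl, hsub⟩, hxl⟩
        rw [hset]

lemma DplusLe_facts {n : ℕ} {p : ℕ × ℕ} (hp : p ∈ DplusLe n) :
    1 ≤ p.1 ∧ p.1 ≤ n ∧ p.2 < 2 ^ p.1 ∧ p.2 % 2 = 1 := by
  rw [DplusLe, Finset.mem_filter, Finset.mem_product, Finset.mem_Icc] at hp
  exact ⟨hp.1.1.1, hp.1.1.2, hp.2.1, hp.2.2⟩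

lemma integral_pert {Atil : ℕ × ℕ → Mat d} {n m k : ℕ} {p : ℕ × ℕ}
    (hp1 : 1 ≤ p.1) (hpn : p.1 ≤ n) (hp2 : p.2 < 2 ^ p.1) (hmn : m ≤ n)
    (hodd : k % 2 = 1) (i j : Fin d) :
    ∫ x in dyad m k,
        (if x ∈ SIdx n p then ((volume (SIdx n p)).toReal)⁻¹ • Atil p else 0) i j
      = if dyad p.1 p.2 ⊆ dyad m k then Atil p i j else 0 := by
  have hent : ∀ x : ℝ, (if x ∈ SIdx n p then ((volume (SIdx n p)).toReal)⁻¹ • Atil p else 0) i j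
      = if x ∈ SIdx n p then ((volume (SIdx n p)).toReal)⁻¹ * Atil p i j else 0 := by
    intro x; split <;> simp
  rw [MeasureTheory.setIntegral_congr_fun (measurableSet_dyad m k) fun x _ => hent x,
    setIntegral_ite_const (show MeasurableSet (SIdx n p) from measurableSet_Ico)]
  have hvol : (volume (SIdx n p)).toReal = (2 ^ (n+1) : ℝ)⁻¹ := by
    rw [SIdx, volume_dyad_toReal]
  rcases dyad_subset_or_disjoint (m := m) (m' := n + 1) (k := k)
      (k' := p.2 * 2 ^ (n + 1 - p.1)) (by omega) with hsub | hdis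
  · have hsub' : SIdx n p ⊆ dyad m k := hsub
    rw [Set.inter_eq_self_of_subset_right hsub',
      if_pos ((SIdx_subset_iff hp1 hpn hp2 hmn hodd).mp hsub'), hvol]
    rw [← mul_assoc, mul_inv_cancel₀ (by positivity : ((2:ℝ)^(n+1))⁻¹ ≠ 0), one_mul]
  · have hdis' : Disjoint (SIdx n p) (dyad m k) := hdis
    rw [hdis'.symm.inter_eq, measure_empty,
      if_neg (fun hsub => ?_)]
    · simp
    · have := (SIdx_subset_iff hp1 hpn hp2 hmn hodd).mpr hsub
      obtain ⟨x, hx⟩ := dyad_nonempty (n+1) (p.2 * 2 ^ (n + 1 - p.1))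
      exact Set.disjoint_left.mp hdis' hx (this hx)

lemma dotp_eq_dotProduct (v e : Fin d → ℝ) : dotp v e = dotProduct e v := by
  rw [dotp, dotProduct]; exact Finset.sum_congr rfl fun i _ => mul_comm _ _

lemma dotp_avgMat {W : ℝ → Mat d} {I : Set ℝ} (hint : ∀ i j, IntegrableOn (fun x => W x i j) I)
    (e : Fin d → ℝ) :
    dotp (avgMat I W *ᵥ e) e = (volume I).toReal⁻¹ * ∫ x in I, dotp (W x *ᵥ e) e := by
  have key : ∀ (M : Mat d), dotp (M *ᵥ e) e = ∑ i, ∑ j, M i j * (e j * e i) := by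
    intro M
    rw [dotp]
    refine Finset.sum_congr rfl fun i _ => ?_
    rw [Matrix.mulVec, dotProduct, Finset.sum_mul]
    exact Finset.sum_congr rfl fun j _ => by ring
  rw [key]
  have hmain : ∫ x in I, dotp (W x *ᵥ e) e = ∑ i, ∑ j, (∫ x in I, W x i j) * (e j * e i) := by
    calc ∫ x in I, dotp (W x *ᵥ e) e = ∫ x in I, ∑ i, ∑ j, W x i j * (e j * e i) :=
          integral_congr_ae (Filter.Eventually.of_forall fun x => key (W x))
      _ = ∑ i, ∫ x in I, ∑ j, W x i j * (e j * e i) := integral_finset_sum _ (fun i _ =>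
            integrable_finset_sum _ fun j _ => (hint i j).mul_const _)
      _ = ∑ i, ∑ j, ∫ x in I, W x i j * (e j * e i) := Finset.sum_congr rfl fun i _ =>
            integral_finset_sum _ (fun j _ => (hint i j).mul_const _)
      _ = ∑ i, ∑ j, (∫ x in I, W x i j) * (e j * e i) := by
            refine Finset.sum_congr rfl fun i _ => Finset.sum_congr rfl fun j _ => ?_
            rw [integral_mul_const]
  rw [hmain, Finset.mul_sum]
  refine Finset.sum_congr rfl fun i _ => ?_
  rw [Finset.mul_sum]
  refine Finset.sum_congr rfl fun j _ => ?_
  rw [avgMat, Matrix.of_apply, avgOn, smul_eq_mul]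
  ring

lemma dotp_avgMat_nonneg {W : ℝ → Mat d} (hW : IsMatrixWeight d W) {n k : ℕ}
    (hk : k < 2 ^ n) (e : Fin d → ℝ) :
    0 ≤ dotp (avgMat (dyad n k) W *ᵥ e) e := by
  rw [dotp_avgMat (fun i j => intOn_dyad hW hk i j)]
  apply mul_nonneg (by positivity)
  apply integral_nonneg_of_ae
  have hae : ∀ᵐ x ∂(volume.restrict (dyad n k)), (W x).PosDef :=
    ae_restrict_of_ae_restrict_of_subset (dyad_subset_I0 hk) hW.posdef
  filter_upwards [hae] with x hx
  by_cases he : e = 0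
  · simp [he, dotp]
  · rw [dotp_eq_dotProduct]
    have := hx.dotProduct_mulVec_pos he
    simpa using this.le

lemma avgMat_isSymm {W : ℝ → Mat d} (hW : IsMatrixWeight d W) (I : Set ℝ) :
    (avgMat I W).IsSymm := by
  rw [Matrix.IsSymm]
  ext i j
  rw [Matrix.transpose_apply, avgMat, Matrix.of_apply, Matrix.of_apply]
  congr 1
  funext x
  have h := hW.symm x
  calc W x j i = (W x)ᵀ i j := rfl
    _ = W x i j := by rw [h]

lemma isHermitian_of_isSymm {M : Mat d} (h : M.IsSymm) : M.IsHermitian := by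
  rw [Matrix.IsHermitian]
  ext i j
  rw [Matrix.conjTranspose_apply, star_trivial]
  have := congrFun (congrFun h i) j
  simpa [Matrix.transpose_apply] using this

lemma dotp_sub {d : ℕ} (v w e : Fin d → ℝ) : dotp (v - w) e = dotp v e - dotp w e := by
  simp [dotp, sub_mul, Finset.sum_sub_distrib]

lemma dotp_smul {d : ℕ} (c : ℝ) (v e : Fin d → ℝ) : dotp (c • v) e = c * dotp v e := by
  simp [dotp, Finset.mul_sum, mul_assoc]

lemma dotp_sum_mulVec {d : ℕ} {α : Type*} (F : Finset α) (A : α → Mat d) (e : Fin d → ℝ) :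
    dotp ((∑ p ∈ F, A p) *ᵥ e) e = ∑ p ∈ F, dotp (A p *ᵥ e) e := by
  classical
  induction F using Finset.induction with
  | empty => simp [dotp, Matrix.zero_mulVec]
  | insert _ _ h ih =>
    rw [Finset.sum_insert h, Finset.sum_insert h, Matrix.add_mulVec, ← ih]
    rw [dotp, dotp, dotp, ← Finset.sum_add_distrib]
    refine Finset.sum_congr rfl fun i _ => ?_
    simp [Pi.add_apply]
    ring

/-- If `(Ã_J)_{J∈𝒟}` are positive semidefinite and satisfy the Carleson condition
`(1/|I|) Σ_{J∈𝒟(I)} Ã_J ≤ ⟨W⟩_I` for all `I ∈ 𝒟`, then for every `I ∈ 𝒟₊^{≤n}` and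
`s ≥ 0`, `⟨W_{n,s}⟩_I = ⟨W⟩_I + (s/|I|) Σ_{J∈𝒟₊^{≤n}, J⊆I} Ã_J ≤ (1+s) ⟨W⟩_I`
in the sense of quadratic forms. -/
theorem perturbed_weight_average {d : ℕ} (W : ℝ → Mat d) (hW : IsMatrixWeight d W)
    (Atil : ℕ × ℕ → Mat d)
    (hpsd : ∀ p : ℕ × ℕ, p.2 < 2 ^ p.1 → (Atil p).PosSemidef)
    (hcarl : ∀ n k : ℕ, k < 2 ^ n → ∀ e : Fin d → ℝ,
      (∑' q : ℕ × ℕ,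
          if q.2 < 2 ^ q.1 ∧ dyad q.1 q.2 ⊆ dyad n k then
            ENNReal.ofReal (dotp (Atil q *ᵥ e) e)
          else 0) ≤
        ENNReal.ofReal
          ((volume (dyad n k)).toReal * dotp (avgMat (dyad n k) W *ᵥ e) e))
    (n : ℕ) (s : ℝ) (hs : 0 ≤ s)
    (m k : ℕ) (hm1 : 1 ≤ m) (hmn : m ≤ n) (hk : k < 2 ^ m) (hodd : k % 2 = 1) :
    avgMat (dyad m k) (Wns W Atil n s) =
      avgMat (dyad m k) W +
        (s * ((volume (dyad m k)).toReal)⁻¹) •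
          ∑ p ∈ (DplusLe n).filter (fun p => dyad p.1 p.2 ⊆ dyad m k), Atil p ∧
    matLE (avgMat (dyad m k) (Wns W Atil n s)) ((1 + s) • avgMat (dyad m k) W) := by
  set F := (DplusLe n).filter (fun p => dyad p.1 p.2 ⊆ dyad m k) with hF
  have hvol : (volume (dyad m k)).toReal = (2 ^ m : ℝ)⁻¹ := volume_dyad_toReal m k
  -- the identity
  have hid : avgMat (dyad m k) (Wns W Atil n s) =
      avgMat (dyad m k) W +
        (s * ((volume (dyad m k)).toReal)⁻¹) • ∑ p ∈ F, Atil p := by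
    ext i j
    have hgint : ∀ p ∈ DplusLe n, IntegrableOn
        (fun x => (if x ∈ SIdx n p then ((volume (SIdx n p)).toReal)⁻¹ • Atil p else 0) i j)
        (dyad m k) := by
      intro p hp
      have heq : (fun x =>
            (if x ∈ SIdx n p then ((volume (SIdx n p)).toReal)⁻¹ • Atil p else 0) i j)
          = fun x =>
            (if x ∈ SIdx n p then ((volume (SIdx n p)).toReal)⁻¹ * Atil p i j else 0) := by
        funext x; split <;> simp
      rw [heq]
      exact integrableOn_ite_const (show MeasurableSet (SIdx n p) from measurableSet_Ico)
        (volume_dyad_lt_top m k)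
    have hint : ∫ x in dyad m k, Wns W Atil n s x i j
        = (∫ x in dyad m k, W x i j) + s * ∑ p ∈ F, Atil p i j := by
      have hWnsx : ∀ x, Wns W Atil n s x i j = Wmart W n x i j
          + s * ∑ p ∈ DplusLe n,
              (if x ∈ SIdx n p then ((volume (SIdx n p)).toReal)⁻¹ • Atil p else 0) i j := by
        intro x
        rw [Wns, Matrix.add_apply, Matrix.smul_apply, Matrix.sum_apply, smul_eq_mul]
      rw [setIntegral_congr_fun (measurableSet_dyad m k) fun x _ => hWnsx x,
        integral_add (integrableOn_Wmart_entry (volume_dyad_lt_top m k) i j)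
          ((integrable_finset_sum _ hgint).const_mul s),
        integral_Wmart hW hmn hk i j, integral_const_mul,
        integral_finset_sum _ hgint]
      congr 2
      calc ∑ p ∈ DplusLe n, ∫ x in dyad m k,
            (if x ∈ SIdx n p then ((volume (SIdx n p)).toReal)⁻¹ • Atil p else 0) i j
          = ∑ p ∈ DplusLe n, (if dyad p.1 p.2 ⊆ dyad m k then Atil p i j else 0) := by
            refine Finset.sum_congr rfl fun p hp => ?_
            obtain ⟨h1, h2, h3, _⟩ := DplusLe_facts hp
            exact integral_pert h1 h2 h3 hmn hodd i j
        _ = ∑ p ∈ F, Atil p i j := (Finset.sum_filter _ _).symm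
    simp only [avgMat, Matrix.of_apply, Matrix.add_apply, Matrix.smul_apply,
      Matrix.sum_apply, smul_eq_mul, avgOn]
    rw [hint]
    ring
  refine ⟨hid, ?_⟩
  rw [matLE, hid]
  have hM : (1 + s) • avgMat (dyad m k) W -
      (avgMat (dyad m k) W + (s * ((volume (dyad m k)).toReal)⁻¹) • ∑ p ∈ F, Atil p)
      = s • avgMat (dyad m k) W - (s * ((volume (dyad m k)).toReal)⁻¹) • ∑ p ∈ F, Atil p := by
    rw [add_smul, one_smul]; abel
  rw [hM]
  have hAvgH : (avgMat (dyad m k) W).IsHermitian :=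
    isHermitian_of_isSymm (avgMat_isSymm hW _)
  have hSigH : (∑ p ∈ F, Atil p).IsHermitian := by
    rw [Matrix.IsHermitian, Matrix.conjTranspose_sum]
    exact Finset.sum_congr rfl fun p hp =>
      (hpsd p (DplusLe_facts (Finset.mem_filter.mp hp).1).2.2.1).1
  refine Matrix.PosSemidef.of_dotProduct_mulVec_nonneg ?_ ?_
  · rw [Matrix.IsHermitian, Matrix.conjTranspose_sub, Matrix.conjTranspose_smul,
      Matrix.conjTranspose_smul, hAvgH.eq, hSigH.eq]
    norm_num
  · intro e
    have hX : 0 ≤ dotp (avgMat (dyad m k) W *ᵥ e) e := dotp_avgMat_nonneg hW hk e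
    -- key bound
    have hYX : ∑ p ∈ F, dotp (Atil p *ᵥ e) e
        ≤ (volume (dyad m k)).toReal * dotp (avgMat (dyad m k) W *ᵥ e) e := by
      have hterm : ∀ p ∈ F, 0 ≤ dotp (Atil p *ᵥ e) e := by
        intro p hp
        have h3 := (DplusLe_facts (Finset.mem_filter.mp hp).1).2.2.1
        rw [dotp_eq_dotProduct]
        simpa using (hpsd p h3).dotProduct_mulVec_nonneg e
      have h1 : ENNReal.ofReal (∑ p ∈ F, dotp (Atil p *ᵥ e) e)
          = ∑ p ∈ F, ENNReal.ofReal (dotp (Atil p *ᵥ e) e) :=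
        ENNReal.ofReal_sum_of_nonneg hterm
      have h2 : ∑ p ∈ F, ENNReal.ofReal (dotp (Atil p *ᵥ e) e)
          ≤ ∑' q : ℕ × ℕ,
            if q.2 < 2 ^ q.1 ∧ dyad q.1 q.2 ⊆ dyad m k then
              ENNReal.ofReal (dotp (Atil q *ᵥ e) e)
            else 0 := by
        have : ∀ p ∈ F, ENNReal.ofReal (dotp (Atil p *ᵥ e) e)
            = if p.2 < 2 ^ p.1 ∧ dyad p.1 p.2 ⊆ dyad m k then
                ENNReal.ofReal (dotp (Atil p *ᵥ e) e) else 0 := by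
          intro p hp
          obtain ⟨hp1, hp2⟩ := Finset.mem_filter.mp hp
          rw [if_pos ⟨(DplusLe_facts hp1).2.2.1, hp2⟩]
        rw [Finset.sum_congr rfl this]
        exact ENNReal.sum_le_tsum F
      have h3 := hcarl m k hk e
      have h4 : ENNReal.ofReal (∑ p ∈ F, dotp (Atil p *ᵥ e) e)
          ≤ ENNReal.ofReal
            ((volume (dyad m k)).toReal * dotp (avgMat (dyad m k) W *ᵥ e) e) :=
        h1 ▸ (le_trans h2 h3)
      exact (ENNReal.ofReal_le_ofReal_iff (by positivity)).mp h4
    -- assemble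
    have hsub : (star e) ⬝ᵥ ((s • avgMat (dyad m k) W -
        (s * ((volume (dyad m k)).toReal)⁻¹) • ∑ p ∈ F, Atil p) *ᵥ e)
        = s * dotp (avgMat (dyad m k) W *ᵥ e) e
          - (s * ((volume (dyad m k)).toReal)⁻¹) * ∑ p ∈ F, dotp (Atil p *ᵥ e) e := by
      rw [star_trivial, ← dotp_eq_dotProduct, Matrix.sub_mulVec, dotp_sub,
        Matrix.smul_mulVec, Matrix.smul_mulVec, dotp_smul, dotp_smul,
        dotp_sum_mulVec]
    rw [hsub]
    have htpos : (0:ℝ) < (volume (dyad m k)).toReal := by rw [hvol]; positivity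
    have := mul_nonneg hs (sub_nonneg.mpr
      ((inv_mul_le_iff₀ htpos).mpr hYX : ((volume (dyad m k)).toReal)⁻¹ *
        ∑ p ∈ F, dotp (Atil p *ᵥ e) e ≤ dotp (avgMat (dyad m k) W *ᵥ e) e))
    nlinarith [this]
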